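/- Let q > 1 and 1/(1+√q) < s² < 1 with s > 0. For each η = (η₁, η₂) ∈ ℝ² with η₁² + η₂² = 1, every solution ξ = (ξ₁, ξ₂) with ξ₁² + ξ₂² = 1 of the equation √q·(η₁·ξ₂ − s²·η₂·ξ₁) + (1 − s²)·ξ₁·ξ₂ = 0 satisfies: if η₁·η₂ ≠ 0, then |η₁|/|ξ₁| − s²·|η₂|/|ξ₂| = ±(1 − s²)/√q (and in particular ξ₁·ξ₂ ≠ 0). -/

import Mathlib

open Real

set_option maxHeartbeats 1000000 in
theorem stmt_17 (q s : ℝ) (hq : 1 < q) (hs : 0 < s)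
    (hs1 : 1 / (1 + Real.sqrt q) < s ^ 2) (hs2 : s ^ 2 < 1)
    (η₁ η₂ ξ₁ ξ₂ : ℝ) (hη : η₁ ^ 2 + η₂ ^ 2 = 1) (hξ : ξ₁ ^ 2 + ξ₂ ^ 2 = 1)
    (heq : Real.sqrt q * (η₁ * ξ₂ - s ^ 2 * η₂ * ξ₁) + (1 - s ^ 2) * ξ₁ * ξ₂ = 0)
    (hne : η₁ * η₂ ≠ 0) :
    ξ₁ * ξ₂ ≠ 0 ∧
    (|η₁| / |ξ₁| - s ^ 2 * |η₂| / |ξ₂| = (1 - s ^ 2) / Real.sqrt q ∨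
     |η₁| / |ξ₁| - s ^ 2 * |η₂| / |ξ₂| = -((1 - s ^ 2) / Real.sqrt q)) := by
  have hη1 : η₁ ≠ 0 := fun h => hne (by simp [h])
  have hη2 : η₂ ≠ 0 := fun h => hne (by simp [h])
  have hsqpos : 0 < Real.sqrt q := Real.sqrt_pos.mpr (by linarith)
  have hsq1 : 1 < Real.sqrt q := by
    rw [show (1:ℝ) = Real.sqrt 1 by simp]
    exact Real.sqrt_lt_sqrt (by norm_num) hq
  have hξ1 : ξ₁ ≠ 0 := by
    intro h
    subst h
    have h2 : ξ₂ ^ 2 = 1 := by linarith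
    have hξ2 : ξ₂ ≠ 0 := by intro h; rw [h] at h2; norm_num at h2
    have : Real.sqrt q * (η₁ * ξ₂) = 0 := by linarith [heq]
    have : η₁ * ξ₂ = 0 := by
      rcases mul_eq_zero.mp this with h | h
      · exact absurd h (ne_of_gt hsqpos)
      · exact h
    rcases mul_eq_zero.mp this with h | h
    · exact hη1 h
    · exact hξ2 h
  have hξ2 : ξ₂ ≠ 0 := by
    intro h
    subst h
    have h2 : ξ₁ ^ 2 = 1 := by linarith
    have hξ1' : ξ₁ ≠ 0 := by intro h; rw [h] at h2; norm_num at h2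
    have h3 : Real.sqrt q * (s ^ 2 * η₂ * ξ₁) = 0 := by linarith [heq]
    have h4 : s ^ 2 * η₂ * ξ₁ = 0 := by
      rcases mul_eq_zero.mp h3 with h | h
      · exact absurd h (ne_of_gt hsqpos)
      · exact h
    rcases mul_eq_zero.mp h4 with h | h
    · rcases mul_eq_zero.mp h with h | h
      · nlinarith
      · exact hη2 h
    · exact hξ1' h
  refine ⟨mul_ne_zero hξ1 hξ2, ?_⟩
  set A : ℝ := η₁ / ξ₁ with hA
  set B : ℝ := s ^ 2 * η₂ / ξ₂ with hB
  set c : ℝ := (1 - s ^ 2) / Real.sqrt q with hc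
  have hcpos : 0 < c := div_pos (by linarith) hsqpos
  have key : A - B = -c := by
    rw [hA, hB, hc]
    field_simp
    linear_combination heq
  -- c < s^2
  have hcs : c < s ^ 2 := by
    rw [hc, div_lt_iff₀ hsqpos]
    have h1 : 0 < 1 + Real.sqrt q := by linarith
    rw [div_lt_iff₀ h1] at hs1
    nlinarith
  have hη₁A : η₁ = A * ξ₁ := by rw [hA]; field_simp
  have hη₂B : η₂ * s ^ 2 = B * ξ₂ := by rw [hB]; field_simp
  -- A and B have the same sign
  have hABpos : 0 < A * B := by
    by_contra hcon
    push_neg at hcon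
    have hBA : B = A + c := by linarith [key]
    have hA0 : A ≤ 0 := by
      by_contra h
      push_neg at h
      have hB' : 0 < B := by rw [hBA]; linarith
      exact absurd hcon (not_le.mpr (mul_pos h hB'))
    have hB0 : 0 ≤ B := by
      by_contra h
      push_neg at h
      have hA' : A < 0 := by rw [hBA] at h; linarith
      exact absurd hcon (not_le.mpr (mul_pos_of_neg_of_neg hA' h))
    have hAc : A ^ 2 ≤ c ^ 2 := by nlinarith [hBA, hA0, hB0, hcpos]
    have hBc : B ^ 2 ≤ c ^ 2 := by nlinarith [hBA, hA0, hB0, hcpos]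
    have hc2 : c ^ 2 < s ^ 4 := by
      have := pow_lt_pow_left₀ hcs (le_of_lt hcpos) (by norm_num : 2 ≠ 0)
      calc c ^ 2 < (s ^ 2) ^ 2 := this
        _ = s ^ 4 := by ring
    have hη' : A ^ 2 * ξ₁ ^ 2 * s ^ 4 + B ^ 2 * ξ₂ ^ 2 = s ^ 4 := by
      have := hη
      rw [hη₁A] at this
      linear_combination s ^ 4 * this - (η₂ * s ^ 2 + B * ξ₂) * hη₂B
    have hs41 : s ^ 4 ≤ 1 := by nlinarith [hs2, sq_nonneg s]
    have t1 : A ^ 2 * ξ₁ ^ 2 * s ^ 4 ≤ A ^ 2 * ξ₁ ^ 2 :=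
      mul_le_of_le_one_right (by positivity) hs41
    have t2 : A ^ 2 * ξ₁ ^ 2 ≤ c ^ 2 * ξ₁ ^ 2 :=
      mul_le_mul_of_nonneg_right hAc (sq_nonneg ξ₁)
    have t3 : B ^ 2 * ξ₂ ^ 2 ≤ c ^ 2 * ξ₂ ^ 2 :=
      mul_le_mul_of_nonneg_right hBc (sq_nonneg ξ₂)
    have hsum : c ^ 2 * ξ₁ ^ 2 + c ^ 2 * ξ₂ ^ 2 = c ^ 2 := by
      linear_combination c ^ 2 * hξ
    linarith [hη', hc2]
  have habs : |η₁| / |ξ₁| - s ^ 2 * |η₂| / |ξ₂| = |A| - |B| := by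
    rw [hA, hB, abs_div, abs_div, abs_mul, abs_of_nonneg (sq_nonneg s)]
  rw [habs]
  rcases lt_or_gt_of_ne (fun h : A = 0 => by simp [h] at hABpos) with hApos | hAneg
  · -- A < 0, so B < 0
    have hBneg : B < 0 := by nlinarith
    left
    rw [abs_of_neg hApos, abs_of_neg hBneg]
    linarith [key]
  · have hBpos : 0 < B := by nlinarith
    right
    rw [abs_of_pos hAneg, abs_of_pos hBpos]
    linarith [key]
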